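/- Under the hypotheses of the previous statement (t_CH solving dt_CH/dU = (1/2)μ(t_CH(U),U) with μ(t,U) = (n/c)(U)(1 + tG(U)) and G(0) = -1/T_Shock, G'(0)=0, G''(0)>0), one has t_Sing(U) < t_CH(U) for all sufficiently small U > 0, where t_Sing(U) = -1/G(U); i.e., the Cauchy horizon lies strictly above the fictitious portion of the zero level set of μ for U > 0. -/

import Mathlib

open Set intervalIntegral

theorem cauchy_horizon_below_fictitious_singular_curve
    (T δ c₀ U₀ : ℝ) (hT : 0 < T) (hδ : δ = 1 / T) (hc₀ : 0 < c₀) (hU₀ : 0 < U₀)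
    (G r : ℝ → ℝ) (hG : ContDiff ℝ 2 G) (hr : ContDiff ℝ 2 r)
    (hG0 : G 0 = -δ) (hG1 : deriv G 0 = 0) (hG2 : 0 < iteratedDeriv 2 G 0)
    (hrbound : ∀ U : ℝ, c₀ ≤ r U ∧ r U ≤ 1)
    (tCH : ℝ → ℝ) (htCH0 : tCH 0 = T)
    (hODE : ∀ U ∈ Set.Icc (0 : ℝ) U₀,
      HasDerivWithinAt tCH ((1 / 2) * ((1 + tCH U * G U) / r U)) (Set.Icc 0 U₀) U) :
    ∃ U₁ : ℝ, 0 < U₁ ∧ U₁ ≤ U₀ ∧ ∀ U ∈ Set.Ioc (0 : ℝ) U₁, tCH U < -1 / G U := by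
  have hGc : Continuous G := hG.continuous
  have hrc : Continuous r := hr.continuous
  have hrne : ∀ U, r U ≠ 0 := fun U => ne_of_gt (lt_of_lt_of_le hc₀ (hrbound U).1)
  -- derivative of G is C¹
  have hG' : ContDiff ℝ 1 (deriv G) := by
    have h2 : ContDiff ℝ (1 + 1) G := by
      have h12 : ((1 : WithTop ℕ∞) + 1) = 2 := by norm_num
      rw [h12]; exact hG
    exact (contDiff_succ_iff_deriv.mp h2).2.2
  -- deriv G has positive derivative at 0
  have hG'' : HasDerivAt (deriv G) (iteratedDeriv 2 G 0) 0 := by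
    have h := (hG'.differentiable one_ne_zero) 0
    have : iteratedDeriv 2 G 0 = deriv (deriv G) 0 := by
      simp [iteratedDeriv_succ, iteratedDeriv_one]
    rw [this]
    exact h.hasDerivAt
  -- deriv G > 0 for small positive U
  have hslope : ∀ᶠ U in nhdsWithin 0 (Set.Ioi (0:ℝ)), 0 < deriv G U := by
    have h1 := hasDerivAt_iff_tendsto_slope.mp hG''
    have h2 : ∀ᶠ U in nhdsWithin 0 ({(0:ℝ)}ᶜ), 0 < slope (deriv G) 0 U :=
      h1.eventually (eventually_gt_nhds hG2)
    have h3 : nhdsWithin (0:ℝ) (Set.Ioi 0) ≤ nhdsWithin 0 ({(0:ℝ)}ᶜ) :=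
      nhdsWithin_mono _ (fun x hx => ne_of_gt hx)
    filter_upwards [h3 h2, self_mem_nhdsWithin] with U hU hU'
    have hU0 : (0:ℝ) < U := hU'
    have hsl : slope (deriv G) 0 U = deriv G U / U := by
      simp [slope_def_field, hG1]
    rw [hsl] at hU
    exact (div_pos_iff.mp hU).resolve_right (fun h => absurd hU0 (not_lt.mpr h.2.le)) |>.1
  -- G < 0 for small positive U
  have hGneg : ∀ᶠ U in nhdsWithin 0 (Set.Ioi (0:ℝ)), G U < 0 := by
    have : ∀ᶠ U in nhds (0:ℝ), G U < 0 := by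
      have hg0 : G 0 < 0 := by
        have hδpos : (0:ℝ) < δ := by rw [hδ]; positivity
        rw [hG0]; linarith
      exact (hGc.tendsto 0).eventually (eventually_lt_nhds hg0)
    exact nhdsWithin_le_nhds this
  -- tCH > 0 for small positive U
  have htpos : ∀ᶠ U in nhdsWithin 0 (Set.Ioi (0:ℝ)), 0 < tCH U := by
    have hcw : Filter.Tendsto tCH (nhdsWithin 0 (Set.Icc (0:ℝ) U₀)) (nhds T) := by
      rw [← htCH0]
      exact (hODE 0 ⟨le_refl _, hU₀.le⟩).continuousWithinAt
    have h1 : ∀ᶠ U in nhdsWithin 0 (Set.Icc (0:ℝ) U₀), 0 < tCH U :=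
      hcw.eventually (eventually_gt_nhds hT)
    have h2 : nhdsWithin (0:ℝ) (Set.Ioi 0) ≤ nhdsWithin 0 (Set.Icc 0 U₀) := by
      rw [← nhdsWithin_Ioc_eq_nhdsGT hU₀]
      exact nhdsWithin_mono _ Set.Ioc_subset_Icc_self
    exact h2 h1
  -- extract a concrete interval
  obtain ⟨u, hu, hsub⟩ := mem_nhdsGT_iff_exists_Ioo_subset.mp
    ((hslope.and (hGneg.and htpos)) : _)
  set U₁ : ℝ := min (u / 2) (U₀ / 2) with hU₁def
  have hU₁pos : 0 < U₁ := lt_min (by linarith [Set.mem_Ioi.mp hu]) (by linarith)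
  have hU₁ltu : U₁ < u := lt_of_le_of_lt (min_le_left _ _) (by linarith [Set.mem_Ioi.mp hu])
  have hU₁ltU₀ : U₁ < U₀ := lt_of_le_of_lt (min_le_right _ _) (by linarith)
  have hkey : ∀ U ∈ Set.Ioc (0:ℝ) U₁, 0 < deriv G U ∧ G U < 0 ∧ 0 < tCH U := by
    intro U hU
    exact hsub ⟨hU.1, lt_of_le_of_lt hU.2 hU₁ltu⟩
  -- integrating factor
  set A : ℝ → ℝ := fun U => G U / (2 * r U) with hA
  have hAc : Continuous A := hGc.div (by continuity)
    (fun U => mul_ne_zero two_ne_zero (hrne U))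
  set I : ℝ → ℝ := fun U => ∫ t in (0:ℝ)..U, A t with hI
  have hIderiv : ∀ x : ℝ, HasDerivAt I (A x) x := fun x =>
    (hAc.integral_hasStrictDerivAt 0 x).hasDerivAt
  set E : ℝ → ℝ := fun U => Real.exp (-I U) with hE
  have hEderiv : ∀ x : ℝ, HasDerivAt E (Real.exp (-I x) * (-A x)) x := fun x =>
    (hIderiv x).neg.exp
  have hEpos : ∀ x : ℝ, 0 < E x := fun x => Real.exp_pos _
  set g : ℝ → ℝ := fun U => (1 + tCH U * G U) * E U with hg
  -- g is strictly monotone on [0, U₁]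
  have hcontg : ContinuousOn g (Set.Icc 0 U₁) := by
    apply ContinuousOn.mul
    · apply ContinuousOn.add continuousOn_const
      apply ContinuousOn.mul _ (hGc.continuousOn)
      have : ContinuousOn tCH (Set.Icc 0 U₀) := fun U hU => (hODE U hU).continuousWithinAt
      exact this.mono (Set.Icc_subset_Icc le_rfl hU₁ltU₀.le)
    · have hIc : Continuous I := continuous_iff_continuousAt.mpr (fun s => (hIderiv s).continuousAt)
      exact (Real.continuous_exp.comp hIc.neg).continuousOn
  have hmono : StrictMonoOn g (Set.Icc 0 U₁) := by
    apply StrictMonoOn.mono ?_ (le_refl _)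
    apply strictMonoOn_of_deriv_pos (convex_Icc 0 U₁) hcontg
    intro x hx
    rw [interior_Icc] at hx
    have hxIcc : x ∈ Set.Icc (0:ℝ) U₀ := ⟨hx.1.le, le_of_lt (lt_trans hx.2 hU₁ltU₀)⟩
    have hxmem : Set.Icc (0:ℝ) U₀ ∈ nhds x :=
      Icc_mem_nhds hx.1 (lt_trans hx.2 hU₁ltU₀)
    have htd : HasDerivAt tCH ((1 / 2) * ((1 + tCH x * G x) / r x)) x :=
      (hODE x hxIcc).hasDerivAt hxmem
    have hGd : HasDerivAt G (deriv G x) x :=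
      ((hG.differentiable (by norm_num)) x).hasDerivAt
    have hfd : HasDerivAt (fun U => 1 + tCH U * G U)
        ((1 / 2) * ((1 + tCH x * G x) / r x) * G x + tCH x * deriv G x) x := by
      exact (htd.mul hGd).const_add 1
    have hgd : HasDerivAt g
        (((1 / 2) * ((1 + tCH x * G x) / r x) * G x + tCH x * deriv G x) * E x
          + (1 + tCH x * G x) * (Real.exp (-I x) * (-A x))) x := hfd.mul (hEderiv x)
    rw [hgd.deriv]
    have hEx : Real.exp (-I x) = E x := rfl
    have hrx := hrne x
    have hsimp : ((1 / 2) * ((1 + tCH x * G x) / r x) * G x + tCH x * deriv G x) * E x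
          + (1 + tCH x * G x) * (Real.exp (-I x) * (-A x))
        = E x * (tCH x * deriv G x) := by
      rw [hEx, hA]
      field_simp
      ring
    rw [hsimp]
    obtain ⟨hdG, _, htx⟩ := hkey x ⟨hx.1, hx.2.le⟩
    have := hEpos x
    positivity
  -- g 0 = 0
  have hg0 : g 0 = 0 := by
    have hI0 : I 0 = 0 := intervalIntegral.integral_same
    have : (1 : ℝ) + tCH 0 * G 0 = 0 := by
      rw [htCH0, hG0, hδ]
      field_simp
      norm_num
    simp [hg, this]
  refine ⟨U₁, hU₁pos, hU₁ltU₀.le, fun U hU => ?_⟩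
  obtain ⟨_, hGU, _⟩ := hkey U hU
  have hgU : 0 < g U := by
    rw [← hg0]
    exact hmono ⟨le_rfl, hU₁pos.le⟩ ⟨hU.1.le, hU.2⟩ hU.1
  have hfU : 0 < 1 + tCH U * G U := by
    by_contra h
    push_neg at h
    have hgU' : 0 < (1 + tCH U * G U) * E U := hgU
    nlinarith [hEpos U]
  rw [lt_div_iff_of_neg hGU]
  linarith
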